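/- Let X be a nonempty finite set and let C belong to the class 𝒞. Then C is uniformly posterior separable if and only if C satisfies Axiom 1 (Blackwell monotonicity) and additivity, i.e. C(π∘k) = C(π) + ∫ C(k(μ)) dπ(μ) for every π ∈ Δ²(X) and every Borel kernel k : Δ(X) → Δ²(X) that is mean-preserving π-a.e. -/

import Mathlib

set_option linter.unusedSectionVars false

open MeasureTheory

namespace IC

variable {X : Type*} [Fintype X] [Nonempty X]

/-- The belief simplex Δ(X). -/
abbrev Δ (X : Type*) [Fintype X] : Set (X → ℝ) := stdSimplex ℝ X

/-- Δ²(X): Borel probability measures on Δ(X). -/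
abbrev PM (X : Type*) [Fintype X] := ProbabilityMeasure (Δ X)

/-- Barycenter of π ∈ Δ²(X). -/
noncomputable def bar (π : PM X) : X → ℝ :=
  fun x => ∫ ν, (ν : X → ℝ) x ∂(π : Measure (Δ X))

lemma eval_integrable (π : PM X) (x : X) :
    Integrable (fun ν : Δ X => (ν : X → ℝ) x) (π : Measure (Δ X)) := by
  have hc : Continuous (fun ν : Δ X => (ν : X → ℝ) x) :=
    (continuous_apply x).comp continuous_subtype_val
  refine (integrable_const (1 : ℝ)).mono' hc.aestronglyMeasurable ?_
  refine Filter.Eventually.of_forall fun ν => ?_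
  rw [Real.norm_eq_abs, abs_le]
  refine ⟨le_trans (by norm_num) (ν.2.1 x), ?_⟩
  calc (ν : X → ℝ) x ≤ ∑ y, (ν : X → ℝ) y :=
        Finset.single_le_sum (fun y _ => ν.2.1 y) (Finset.mem_univ x)
    _ = 1 := ν.2.2

lemma bar_mem (π : PM X) : bar π ∈ Δ X := by
  constructor
  · intro x; exact integral_nonneg fun ν => ν.2.1 x
  · calc ∑ x, bar π x
        = ∫ ν, ∑ x, (ν : X → ℝ) x ∂(π : Measure (Δ X)) :=
          (integral_finset_sum Finset.univ fun x _ => eval_integrable π x).symm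
      _ = ∫ _ν, (1 : ℝ) ∂(π : Measure (Δ X)) :=
          integral_congr_ae (Filter.Eventually.of_forall fun ν => ν.2.2)
      _ = 1 := by simp

/-- Barycenter as a point of the simplex. -/
noncomputable def barPt (π : PM X) : Δ X := ⟨bar π, bar_mem π⟩

/-- Dirac measure as an element of Δ²(X). -/
noncomputable def diracPM (μ : Δ X) : PM X := ⟨Measure.dirac μ, inferInstance⟩

lemma isProbabilityMeasure_bind {α β : Type*} [MeasurableSpace α] [MeasurableSpace β]
    (π : Measure α) [IsProbabilityMeasure π] (k : α → Measure β) (hk : Measurable k)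
    (hkp : ∀ a, IsProbabilityMeasure (k a)) : IsProbabilityMeasure (π.bind k) := by
  constructor
  rw [Measure.bind_apply MeasurableSet.univ hk.aemeasurable]
  have h1 : ∀ a, k a Set.univ = 1 := fun a => (hkp a).measure_univ
  simp [h1]

/-- The Borel σ-algebra on probability measures (generated by evaluations, via the
canonical σ-algebra on measures). -/
instance instMeasurableSpacePM {Ω : Type*} [MeasurableSpace Ω] :
    MeasurableSpace (ProbabilityMeasure Ω) :=
  MeasurableSpace.comap (fun μ => (μ : Measure Ω)) inferInstance

lemma measurable_pmCoe {Ω : Type*} [MeasurableSpace Ω] :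
    Measurable (fun μ : ProbabilityMeasure Ω => (μ : Measure Ω)) :=
  measurable_iff_comap_le.mpr le_rfl

/-- Composition π∘k of an information structure with a (Borel measurable) kernel. -/
noncomputable def comp (π : PM X) (k : Δ X → PM X) (hk : Measurable k) : PM X :=
  ⟨(π : Measure (Δ X)).bind (fun μ => (k μ : Measure (Δ X))),
    isProbabilityMeasure_bind _ _ (measurable_pmCoe.comp hk) (fun μ => (k μ).2)⟩

/-- ∫ π dP(π), for P a probability measure over Δ²(X). -/
noncomputable def joinPM (P : ProbabilityMeasure (PM X)) : PM X :=
  ⟨(P : Measure (PM X)).bind (fun π => (π : Measure (Δ X))),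
    isProbabilityMeasure_bind _ _ measurable_pmCoe (fun π => π.2)⟩

/-- A kernel is mean preserving π-a.e. -/
def MeanPreservingAE (π : PM X) (k : Δ X → PM X) : Prop :=
  ∀ᵐ μ ∂(π : Measure (Δ X)), bar (k μ) = (μ : X → ℝ)

/-- Axiom 1: Blackwell monotonicity. -/
def Axiom1 (C : PM X → ℝ) : Prop :=
  ∀ (π : PM X) (k : Δ X → PM X) (hk : Measurable k),
    MeanPreservingAE π k → C π ≤ C (comp π k hk)

/-- Axiom 2: subadditivity. -/
def Axiom2 (C : PM X → ℝ) : Prop :=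
  ∀ (π : PM X) (k : Δ X → PM X) (hk : Measurable k),
    C (comp π k hk) ≤ C π + ∫ μ, C (k μ) ∂(π : Measure (Δ X))

/-- The class 𝒞 of direct information cost functions. -/
structure ClassC (C : PM X → ℝ) : Prop where
  nonneg : ∀ π, 0 ≤ C π
  bounded : ∃ M : ℝ, ∀ π, C π ≤ M
  measurable : Measurable C
  dirac_zero : ∀ μ : Δ X, C (diracPM μ) = 0
  mixing : ∀ P : ProbabilityMeasure (PM X),
    (∃ μ₀ : X → ℝ, ∀ᵐ π ∂(P : Measure (PM X)), bar π = μ₀) →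
    C (joinPM P) ≤ ∫ π, C π ∂(P : Measure (PM X))
  contOn : ∀ X' : Set X, ContinuousOn C {π : PM X | {x | 0 < bar π x} = X'}

/-- A replication process for π. -/
structure RepProcess (π : PM X) where
  T : ℕ
  seq : ℕ → PM X
  k : ℕ → Δ X → PM X
  r : ℕ → Δ X → PM X
  k_meas : ∀ t, Measurable (k t)
  r_meas : ∀ t, Measurable (r t)
  init : seq 0 = diracPM (barPt π)
  final : seq (2 * T) = π
  k_mp : ∀ t, t < T → MeanPreservingAE (seq (2 * t)) (k t)
  k_comp : ∀ t, (ht : t < T) → seq (2 * t + 1) = comp (seq (2 * t)) (k t) (k_meas t)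
  r_mp : ∀ t, t < T → MeanPreservingAE (seq (2 * t + 2)) (r t)
  r_comp : ∀ t, (ht : t < T) → seq (2 * t + 1) = comp (seq (2 * t + 2)) (r t) (r_meas t)

/-- Total cost of a replication process. -/
noncomputable def totalCost (C : PM X → ℝ) {π : PM X} (R : RepProcess π) : ℝ :=
  ∑ t ∈ Finset.range R.T, ∫ μ, C (R.k t μ) ∂((R.seq (2 * t) : Measure (Δ X)))

/-- The indirect cost φ(C). -/
noncomputable def phi (C : PM X → ℝ) (π : PM X) : ℝ :=
  sInf (Set.range fun R : RepProcess π => totalCost C R)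

/-- Uniformly posterior separable cost. -/
def UPS (C : PM X → ℝ) : Prop :=
  ∃ H : (X → ℝ) → ℝ, ConvexOn ℝ (Δ X) H ∧
    ∀ π : PM X, C π = (∫ ν, H (ν : X → ℝ) ∂(π : Measure (Δ X))) - H (bar π)


/-- Additivity: equality in the subadditivity axiom, for mean-preserving kernels. -/
def Additive (C : PM X → ℝ) : Prop :=
  ∀ (π : PM X) (k : Δ X → PM X) (hk : Measurable k), MeanPreservingAE π k →
    C (comp π k hk) = C π + ∫ μ, C (k μ) ∂(π : Measure (Δ X))

/-! ### Auxiliary development -/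

open scoped Classical in
/-- The vertex of the simplex at `x`. -/
noncomputable def vert (x : X) : Δ X := ⟨Pi.single x 1, single_mem_stdSimplex ℝ x⟩

lemma vert_apply_self (x : X) : ((vert x : Δ X) : X → ℝ) x = 1 := by
  classical simp [vert]

lemma vert_apply_ne {x y : X} (h : y ≠ x) : ((vert x : Δ X) : X → ℝ) y = 0 := by
  classical simp [vert, Pi.single_apply, h]

lemma vert_injective : Function.Injective (vert (X := X)) := by
  intro x y h
  by_contra hxy
  have h1 := congrArg (fun ν : Δ X => (ν : X → ℝ) x) h
  rw [vert_apply_self, vert_apply_ne hxy] at h1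
  norm_num at h1

/-- The full-information measure over posteriors, for prior μ. -/
noncomputable def fullInfoM (μ : Δ X) : Measure (Δ X) :=
  ∑ x : X, ENNReal.ofReal ((μ : X → ℝ) x) • Measure.dirac (vert x)

lemma fullInfoM_apply (μ : Δ X) (s : Set (Δ X)) (hs : MeasurableSet s) :
    fullInfoM μ s = ∑ x : X, ENNReal.ofReal ((μ : X → ℝ) x) * Measure.dirac (vert x) s := by
  simp [fullInfoM, Measure.finset_sum_apply, Measure.smul_apply, smul_eq_mul]

instance fullInfoM_prob (μ : Δ X) : IsProbabilityMeasure (fullInfoM μ) := by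
  constructor
  rw [fullInfoM_apply μ _ MeasurableSet.univ]
  simp only [measure_univ, mul_one]
  rw [← ENNReal.ofReal_sum_of_nonneg (fun x _ => stdSimplex.zero_le μ x), stdSimplex.sum_eq_one μ, ENNReal.ofReal_one]

/-- Full information structure as an element of Δ²(X). -/
noncomputable def fullInfo (μ : Δ X) : PM X := ⟨fullInfoM μ, fullInfoM_prob μ⟩

lemma measurable_toPM {α : Type*} [MeasurableSpace α] {f : α → PM X}
    (h : Measurable fun a => ((f a : PM X) : Measure (Δ X))) : Measurable f := by
  intro s hs
  obtain ⟨t, ht, rfl⟩ := hs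
  exact h ht

lemma measurable_eval (x : X) : Measurable (fun ν : Δ X => (ν : X → ℝ) x) :=
  (measurable_pi_apply x).comp measurable_subtype_coe

lemma fullInfo_measurable : Measurable (fullInfo (X := X)) := by
  apply measurable_toPM
  apply Measure.measurable_of_measurable_coe
  intro s hs
  show Measurable fun μ : Δ X => fullInfoM μ s
  have heq : (fun μ : Δ X => fullInfoM μ s)
      = fun μ : Δ X => ∑ x : X, ENNReal.ofReal ((μ : X → ℝ) x) * Measure.dirac (vert x) s := by
    funext μ; exact fullInfoM_apply μ s hs
  rw [heq]
  exact Finset.measurable_sum _ fun x _ =>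
    (ENNReal.measurable_ofReal.comp (measurable_eval x)).mul_const _

lemma integrable_dirac' {α : Type*} [MeasurableSpace α] [MeasurableSingletonClass α]
    {f : α → ℝ} (hf : Measurable f) (a : α) : Integrable f (Measure.dirac a) := by
  refine ⟨hf.aestronglyMeasurable, ?_⟩
  rw [HasFiniteIntegral, lintegral_dirac]
  exact ENNReal.coe_lt_top

lemma integral_fullInfoM {f : Δ X → ℝ} (hf : Measurable f) (μ : Δ X) :
    ∫ ν, f ν ∂(fullInfoM μ) = ∑ x : X, (μ : X → ℝ) x * f (vert x) := by
  rw [fullInfoM, integral_finset_sum_measure (fun x _ =>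
    (integrable_dirac' hf (vert x)).smul_measure ENNReal.ofReal_ne_top)]
  refine Finset.sum_congr rfl fun x _ => ?_
  rw [integral_smul_measure, integral_dirac, smul_eq_mul,
    ENNReal.toReal_ofReal (stdSimplex.zero_le μ x)]

/-- Integral of an arbitrary (possibly non-measurable) function against `fullInfoM`. -/
lemma integral_fullInfoM' (f : Δ X → ℝ) (μ : Δ X) :
    ∫ ν, f ν ∂(fullInfoM μ) = ∑ x : X, (μ : X → ℝ) x * f (vert x) := by
  classical
  set g : Δ X → ℝ := fun ν => ∑ x : X, if ν = vert x then f (vert x) else 0 with hg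
  have hgm : Measurable g := by
    refine Finset.measurable_sum _ fun x _ => ?_
    exact Measurable.ite (MeasurableSet.singleton (vert x)) measurable_const measurable_const
  have hgv : ∀ x : X, g (vert x) = f (vert x) := by
    intro x
    rw [hg]
    simp only
    rw [Finset.sum_eq_single x]
    · simp
    · intro y _ hy
      rw [if_neg (fun h => hy (vert_injective h).symm)]
    · simp
  have hae : f =ᵐ[fullInfoM μ] g := by
    set S : Set (Δ X) := ⋃ x : X, {vert x} with hS
    have hSmem : ∀ x : X, vert x ∈ S := fun x => Set.mem_iUnion.mpr ⟨x, rfl⟩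
    have hsub : {ν : Δ X | ¬ f ν = g ν} ⊆ Sᶜ := by
      intro ν hν
      simp only [Set.mem_compl_iff, hS, Set.mem_iUnion, Set.mem_singleton_iff]
      rintro ⟨x, rfl⟩
      exact hν (hgv x).symm
    have hSm : MeasurableSet (Sᶜ) :=
      (MeasurableSet.iUnion fun x => measurableSet_singleton (vert x)).compl
    have h0 : fullInfoM μ (Sᶜ) = 0 := by
      rw [fullInfoM_apply _ _ hSm]
      refine Finset.sum_eq_zero fun x _ => ?_
      rw [Measure.dirac_apply' _ hSm]
      rw [Set.indicator_of_notMem (by simp [hSmem x])]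
      simp
    exact measure_mono_null hsub h0
  rw [integral_congr_ae hae, integral_fullInfoM hgm]
  exact Finset.sum_congr rfl fun x _ => by rw [hgv]

lemma bar_fullInfo (μ : Δ X) : bar (fullInfo μ) = (μ : X → ℝ) := by
  funext x
  show ∫ ν, (ν : X → ℝ) x ∂(fullInfoM μ) = (μ : X → ℝ) x
  rw [integral_fullInfoM (measurable_eval x)]
  rw [Finset.sum_eq_single x]
  · rw [vert_apply_self, mul_one]
  · intro y _ hy
    rw [vert_apply_ne (fun h => hy h.symm), mul_zero]
  · intro h; exact absurd (Finset.mem_univ x) h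

lemma barPt_fullInfo (μ : Δ X) : barPt (fullInfo μ) = μ :=
  Subtype.ext (bar_fullInfo μ)

lemma fullInfo_mp (π : PM X) : MeanPreservingAE π (fullInfo (X := X)) :=
  Filter.Eventually.of_forall fun μ => bar_fullInfo μ

lemma lintegral_eval (π : PM X) (x : X) :
    ∫⁻ μ, ENNReal.ofReal ((μ : X → ℝ) x) ∂(π : Measure (Δ X)) = ENNReal.ofReal (bar π x) := by
  rw [bar, ofReal_integral_eq_lintegral_ofReal (eval_integrable π x)
    (Filter.Eventually.of_forall fun ν => ν.2.1 x)]

set_option maxHeartbeats 1000000 in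
/-- Composing any π with the full-information kernel yields full information from the prior. -/
lemma comp_fullInfo (π : PM X) :
    comp π fullInfo fullInfo_measurable = fullInfo (barPt π) := by
  apply Subtype.ext
  apply Measure.ext
  intro s hs
  show ((π : Measure (Δ X)).bind fun μ => (fullInfo μ : Measure (Δ X))) s = fullInfoM (barPt π) s
  have hmeas : Measurable fun μ : Δ X => ((fullInfo μ : PM X) : Measure (Δ X)) :=
    measurable_pmCoe.comp fullInfo_measurable
  rw [Measure.bind_apply hs hmeas.aemeasurable]
  have h1 : ∀ μ : Δ X, ((fullInfo μ : PM X) : Measure (Δ X)) s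
      = ∑ x : X, ENNReal.ofReal ((μ : X → ℝ) x) * Measure.dirac (vert x) s :=
    fun μ => fullInfoM_apply μ s hs
  calc ∫⁻ μ, ((fullInfo μ : PM X) : Measure (Δ X)) s ∂(π : Measure (Δ X))
      = ∫⁻ μ, ∑ x : X, ENNReal.ofReal ((μ : X → ℝ) x) * Measure.dirac (vert x) s
          ∂(π : Measure (Δ X)) := by
        exact lintegral_congr fun μ => h1 μ
    _ = ∑ x : X, ∫⁻ μ, ENNReal.ofReal ((μ : X → ℝ) x) * Measure.dirac (vert x) s
          ∂(π : Measure (Δ X)) :=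
        lintegral_finset_sum _ fun x _ =>
          (ENNReal.measurable_ofReal.comp (measurable_eval x)).mul_const _
    _ = ∑ x : X, ENNReal.ofReal (bar π x) * Measure.dirac (vert x) s := by
        refine Finset.sum_congr rfl fun x _ => ?_
        have hof : Measurable fun μ : Δ X => ENNReal.ofReal ((μ : X → ℝ) x) :=
          ENNReal.measurable_ofReal.comp (measurable_eval x)
        rw [lintegral_mul_const _ hof, lintegral_eval]
    _ = fullInfoM (barPt π) s := by
        rw [fullInfoM_apply _ s hs]
        rfl

lemma integrable_of_bounded {f : Δ X → ℝ} (hf : Measurable f) {M : ℝ}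
    (hM : ∀ ν, |f ν| ≤ M) (m : Measure (Δ X)) [IsProbabilityMeasure m] : Integrable f m := by
  refine (integrable_const M).mono' hf.aestronglyMeasurable ?_
  refine Filter.Eventually.of_forall fun ν => ?_
  rw [Real.norm_eq_abs]; exact hM ν

lemma measurable_integral_kernel {k : Δ X → PM X} (hk : Measurable k)
    {f : Δ X → ℝ} (hf : Measurable f) {M : ℝ} (hM : ∀ ν, |f ν| ≤ M) :
    Measurable fun μ => ∫ ν, f ν ∂((k μ : PM X) : Measure (Δ X)) := by
  have hint : ∀ μ, Integrable f ((k μ : PM X) : Measure (Δ X)) :=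
    fun μ => integrable_of_bounded hf hM _
  have heq : (fun μ => ∫ ν, f ν ∂((k μ : PM X) : Measure (Δ X)))
      = fun μ => (∫⁻ ν, ENNReal.ofReal (f ν) ∂((k μ : PM X) : Measure (Δ X))).toReal
          - (∫⁻ ν, ENNReal.ofReal (-(f ν)) ∂((k μ : PM X) : Measure (Δ X))).toReal := by
    funext μ
    exact integral_eq_lintegral_pos_part_sub_lintegral_neg_part (hint μ)
  rw [heq]
  have h1 := (Measure.measurable_lintegral
      (ENNReal.measurable_ofReal.comp hf)).comp (measurable_pmCoe.comp hk)
  have h2 := (Measure.measurable_lintegral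
      (ENNReal.measurable_ofReal.comp hf.neg)).comp (measurable_pmCoe.comp hk)
  exact (h1.ennreal_toReal).sub (h2.ennreal_toReal)

/-- Fubini for composition with a kernel, nonnegative bounded case. -/
lemma integral_comp_nonneg (π : PM X) {k : Δ X → PM X} (hk : Measurable k)
    {f : Δ X → ℝ} (hf : Measurable f) {M : ℝ} (h0 : ∀ ν, 0 ≤ f ν) (hM : ∀ ν, f ν ≤ M) :
    ∫ ν, f ν ∂((comp π k hk : PM X) : Measure (Δ X))
      = ∫ μ, (∫ ν, f ν ∂((k μ : PM X) : Measure (Δ X))) ∂(π : Measure (Δ X)) := by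
  have habs : ∀ ν, |f ν| ≤ max M 0 := fun ν => by
    rw [abs_of_nonneg (h0 ν)]; exact le_max_of_le_left (hM ν)
  have hG : Measurable fun μ => ∫ ν, f ν ∂((k μ : PM X) : Measure (Δ X)) :=
    measurable_integral_kernel hk hf habs
  have hG0 : ∀ μ, 0 ≤ ∫ ν, f ν ∂((k μ : PM X) : Measure (Δ X)) :=
    fun μ => integral_nonneg fun ν => h0 ν
  have hkm : Measurable fun μ : Δ X => ((k μ : PM X) : Measure (Δ X)) :=
    measurable_pmCoe.comp hk
  have hof : Measurable fun ν : Δ X => ENNReal.ofReal (f ν) :=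
    ENNReal.measurable_ofReal.comp hf
  rw [integral_eq_lintegral_of_nonneg_ae (Filter.Eventually.of_forall h0)
    hf.aestronglyMeasurable]
  show (∫⁻ ν, ENNReal.ofReal (f ν)
      ∂((π : Measure (Δ X)).bind fun μ => ((k μ : PM X) : Measure (Δ X)))).toReal = _
  rw [Measure.lintegral_bind hkm.aemeasurable hof.aemeasurable]
  have hinner : ∀ μ : Δ X, ∫⁻ ν, ENNReal.ofReal (f ν) ∂((k μ : PM X) : Measure (Δ X))
      = ENNReal.ofReal (∫ ν, f ν ∂((k μ : PM X) : Measure (Δ X))) := fun μ =>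
    (ofReal_integral_eq_lintegral_ofReal (integrable_of_bounded hf habs _)
      (Filter.Eventually.of_forall h0)).symm
  rw [lintegral_congr hinner,
    ← ofReal_integral_eq_lintegral_ofReal
      (integrable_of_bounded hG (fun μ => by
        rw [abs_of_nonneg (hG0 μ)]
        calc ∫ ν, f ν ∂((k μ : PM X) : Measure (Δ X))
            ≤ ∫ _ν, max M 0 ∂((k μ : PM X) : Measure (Δ X)) := by
              refine integral_mono (integrable_of_bounded hf habs _) (integrable_const _) ?_
              intro ν; exact le_max_of_le_left (hM ν)
          _ = max M 0 := by simp
          _ ≤ |max M 0| := le_abs_self _) _)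
      (Filter.Eventually.of_forall hG0),
    ENNReal.toReal_ofReal (integral_nonneg hG0)]

/-- Fubini for composition with a kernel, bounded case. -/
lemma integral_comp (π : PM X) {k : Δ X → PM X} (hk : Measurable k)
    {f : Δ X → ℝ} (hf : Measurable f) {M : ℝ} (hM : ∀ ν, |f ν| ≤ M) :
    ∫ ν, f ν ∂((comp π k hk : PM X) : Measure (Δ X))
      = ∫ μ, (∫ ν, f ν ∂((k μ : PM X) : Measure (Δ X))) ∂(π : Measure (Δ X)) := by
  set F : Δ X → ℝ := fun ν => f ν + M with hF
  have hFm : Measurable F := hf.add_const M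
  have hF0 : ∀ ν, 0 ≤ F ν := fun ν => by
    have := (abs_le.mp (hM ν)).1; simp only [hF]; linarith
  have hFM : ∀ ν, F ν ≤ M + M := fun ν => by
    have := (abs_le.mp (hM ν)).2; simp only [hF]; linarith
  have key := integral_comp_nonneg π hk hFm hF0 hFM
  have habsF : ∀ ν, |F ν| ≤ M + M := fun ν => by
    rw [abs_of_nonneg (hF0 ν)]; exact hFM ν
  have hsplit : ∀ (m : Measure (Δ X)) [IsProbabilityMeasure m],
      ∫ ν, F ν ∂m = (∫ ν, f ν ∂m) + M := by
    intro m hm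
    rw [hF]
    rw [integral_add (integrable_of_bounded hf hM m) (integrable_const M), integral_const]
    simp
  have habsint : ∀ μ : Δ X, |∫ ν, f ν ∂((k μ : PM X) : Measure (Δ X))| ≤ M := by
    intro μ
    calc |∫ ν, f ν ∂((k μ : PM X) : Measure (Δ X))|
        ≤ ∫ ν, |f ν| ∂((k μ : PM X) : Measure (Δ X)) := by
          simpa [Real.norm_eq_abs] using
            norm_integral_le_integral_norm (μ := ((k μ : PM X) : Measure (Δ X))) f
      _ ≤ ∫ _ν, M ∂((k μ : PM X) : Measure (Δ X)) :=
          integral_mono (integrable_of_bounded hf hM _).abs (integrable_const _) hM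
      _ = M := by simp
  rw [hsplit _] at key
  have hinner : ∀ μ : Δ X, ∫ ν, F ν ∂((k μ : PM X) : Measure (Δ X))
      = (∫ ν, f ν ∂((k μ : PM X) : Measure (Δ X))) + M := fun μ => hsplit _
  rw [integral_congr_ae (Filter.Eventually.of_forall hinner)] at key
  rw [integral_add (integrable_of_bounded (measurable_integral_kernel hk hf hM)
    habsint _) (integrable_const M), integral_const] at key
  simp only [measure_univ, probReal_univ, ENNReal.toReal_one, smul_eq_mul, one_mul] at key
  linarith

lemma bar_comp (π : PM X) {k : Δ X → PM X} (hk : Measurable k)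
    (hmp : MeanPreservingAE π k) : barPt (comp π k hk) = barPt π := by
  apply Subtype.ext
  show bar (comp π k hk) = bar π
  funext x
  have h1 : bar (comp π k hk) x
      = ∫ μ, (∫ ν, (ν : X → ℝ) x ∂((k μ : PM X) : Measure (Δ X))) ∂(π : Measure (Δ X)) := by
    apply integral_comp π hk (measurable_eval x) (M := 1)
    intro ν
    rw [abs_of_nonneg (stdSimplex.zero_le ν x)]
    calc (ν : X → ℝ) x ≤ ∑ y, (ν : X → ℝ) y :=
        Finset.single_le_sum (fun y _ => ν.2.1 y) (Finset.mem_univ x)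
      _ = 1 := ν.2.2
  rw [h1]
  refine integral_congr_ae ?_
  filter_upwards [hmp] with μ hμ
  show ∫ ν, (ν : X → ℝ) x ∂((k μ : PM X) : Measure (Δ X)) = (μ : X → ℝ) x
  have : bar (k μ) x = (μ : X → ℝ) x := by rw [hμ]
  exact this


lemma abs_integral_le_bound {f : Δ X → ℝ} (hf : Measurable f) {M : ℝ}
    (hM : ∀ ν, |f ν| ≤ M) (m : Measure (Δ X)) [IsProbabilityMeasure m] :
    |∫ ν, f ν ∂m| ≤ M := by
  calc |∫ ν, f ν ∂m| ≤ ∫ ν, |f ν| ∂m := by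
        simpa [Real.norm_eq_abs] using norm_integral_le_integral_norm (μ := m) f
    _ ≤ ∫ _ν, M ∂m := integral_mono (integrable_of_bounded hf hM _).abs (integrable_const _) hM
    _ = M := by simp

/-- Additivity follows from a uniformly-posterior-separable representation
with bounded measurable potential. -/
lemma additive_of_rep {C : PM X → ℝ} {g : Δ X → ℝ} (hgm : Measurable g) {Mg : ℝ}
    (hgabs : ∀ ν, |g ν| ≤ Mg)
    (hform' : ∀ π : PM X, C π = (∫ ν, g ν ∂(π : Measure (Δ X))) - g (barPt π)) :
    Additive C := by
  intro π k hk hmp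
  have hmeasG : Measurable fun μ => ∫ ν, g ν ∂((k μ : PM X) : Measure (Δ X)) :=
    measurable_integral_kernel hk hgm hgabs
  have habsG : ∀ μ, |∫ ν, g ν ∂((k μ : PM X) : Measure (Δ X))| ≤ Mg :=
    fun μ => abs_integral_le_bound hgm hgabs _
  have h1 : C (comp π k hk)
      = (∫ μ, (∫ ν, g ν ∂((k μ : PM X) : Measure (Δ X))) ∂(π : Measure (Δ X)))
        - g (barPt π) := by
    rw [hform' (comp π k hk), integral_comp π hk hgm hgabs, bar_comp π hk hmp]
  have h2 : ∫ μ, C (k μ) ∂(π : Measure (Δ X))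
      = ∫ μ, ((∫ ν, g ν ∂((k μ : PM X) : Measure (Δ X))) - g μ) ∂(π : Measure (Δ X)) := by
    refine integral_congr_ae ?_
    filter_upwards [hmp] with μ hμ
    rw [hform' (k μ), show barPt (k μ) = μ from Subtype.ext hμ]
  have h3 : ∫ μ, ((∫ ν, g ν ∂((k μ : PM X) : Measure (Δ X))) - g μ) ∂(π : Measure (Δ X))
      = (∫ μ, (∫ ν, g ν ∂((k μ : PM X) : Measure (Δ X))) ∂(π : Measure (Δ X)))
        - ∫ μ, g μ ∂(π : Measure (Δ X)) :=
    integral_sub (integrable_of_bounded hmeasG habsG _) (integrable_of_bounded hgm hgabs _)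
  rw [h1, hform' π, h2, h3]
  ring

/-- Lemma `lem:add`: a cost C ∈ 𝒞 is uniformly posterior separable
iff it satisfies Blackwell monotonicity (Axiom 1) and additivity. -/
theorem ups_iff_mono_additive (C : PM X → ℝ) (hC : ClassC C) :
    UPS C ↔ (Axiom1 C ∧ Additive C) := by
  classical
  obtain ⟨M, hMb⟩ := hC.bounded
  have hCabs : ∀ π, |C π| ≤ M := fun π => by
    rw [abs_of_nonneg (hC.nonneg π)]; exact hMb π
  constructor
  · rintro ⟨H, hconv, hform⟩
    set c : X → ℝ := fun x => H ((vert x : Δ X) : X → ℝ) with hc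
    set g : Δ X → ℝ := fun ν => (∑ x : X, (ν : X → ℝ) x * c x) - C (fullInfo ν) with hgdef
    have hgm : Measurable g := by
      rw [hgdef]
      exact (Finset.measurable_sum _ fun x _ => (measurable_eval x).mul_const _).sub
        (hC.measurable.comp fullInfo_measurable)
    have hgabs : ∀ ν, |g ν| ≤ (∑ x : X, |c x|) + M := by
      intro ν
      have h1 : |∑ x : X, (ν : X → ℝ) x * c x| ≤ ∑ x : X, |c x| := by
        calc |∑ x : X, (ν : X → ℝ) x * c x| ≤ ∑ x : X, |(ν : X → ℝ) x * c x| :=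
            Finset.abs_sum_le_sum_abs _ _
          _ ≤ ∑ x : X, |c x| := by
            refine Finset.sum_le_sum fun x _ => ?_
            rw [abs_mul, abs_of_nonneg (stdSimplex.zero_le ν x)]
            have hle1 : (ν : X → ℝ) x ≤ 1 := by
              calc (ν : X → ℝ) x ≤ ∑ y, (ν : X → ℝ) y :=
                  Finset.single_le_sum (fun y _ => ν.2.1 y) (Finset.mem_univ x)
                _ = 1 := ν.2.2
            nlinarith [abs_nonneg (c x)]
      have h2 : |g ν| ≤ |∑ x : X, (ν : X → ℝ) x * c x| + |C (fullInfo ν)| := by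
        rw [hgdef]
        simp only
        rw [sub_eq_add_neg]
        exact (abs_add_le _ _).trans (by rw [abs_neg])
      have h3 := hCabs (fullInfo ν)
      linarith
    have hgval : ∀ ν : Δ X, H ((ν : Δ X) : X → ℝ) = g ν := by
      intro ν
      have h1 := hform (fullInfo ν)
      have hI : ∫ ν', H ((ν' : Δ X) : X → ℝ) ∂((fullInfo ν : PM X) : Measure (Δ X))
          = ∑ x : X, (ν : X → ℝ) x * H ((vert x : Δ X) : X → ℝ) :=
        integral_fullInfoM' (fun ν' => H ((ν' : Δ X) : X → ℝ)) ν
      rw [hI, bar_fullInfo] at h1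
      have : g ν = (∑ x : X, (ν : X → ℝ) x * c x) - C (fullInfo ν) := by rw [hgdef]
      rw [this, hc]
      linarith
    have hform' : ∀ π : PM X, C π = (∫ ν, g ν ∂(π : Measure (Δ X))) - g (barPt π) := by
      intro π
      rw [hform π,
        integral_congr_ae (Filter.Eventually.of_forall fun ν => (by exact hgval ν :
          H ((ν : Δ X) : X → ℝ) = g ν))]
      have : H (bar π) = g (barPt π) := hgval (barPt π)
      rw [this]
    have hadd : Additive C := additive_of_rep hgm hgabs hform'
    refine ⟨?_, hadd⟩
    intro π k hk hmp
    rw [hadd π k hk hmp]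
    have h0 : 0 ≤ ∫ μ, C (k μ) ∂(π : Measure (Δ X)) :=
      integral_nonneg fun μ => hC.nonneg _
    linarith
  · rintro ⟨_, hadd⟩
    refine ⟨fun v => if h : v ∈ Δ X then -C (fullInfo ⟨v, h⟩) else 0, ?_, ?_⟩
    · refine ⟨convex_stdSimplex ℝ X, ?_⟩
      intro v hv w hw a b ha hb hab
      have hmem : a • v + b • w ∈ Δ X := convex_stdSimplex ℝ X hv hw ha hb hab
      simp only [smul_eq_mul, dif_pos hmem, dif_pos hv, dif_pos hw]
      have hkey : a * C (fullInfo ⟨v, hv⟩) + b * C (fullInfo ⟨w, hw⟩)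
          ≤ C (fullInfo ⟨a • v + b • w, hmem⟩) := by
        rcases eq_or_lt_of_le ha with ha0 | hapos
        · have hb1 : b = 1 := by linarith
          have hvw : (⟨a • v + b • w, hmem⟩ : Δ X) = ⟨w, hw⟩ := by
            apply Subtype.ext
            simp [← ha0, hb1]
          rw [hvw, ← ha0, hb1]
          have := hC.nonneg (fullInfo ⟨v, hv⟩)
          linarith
        rcases eq_or_lt_of_le hb with hb0 | hbpos
        · have ha1 : a = 1 := by linarith
          have hvw : (⟨a • v + b • w, hmem⟩ : Δ X) = ⟨v, hv⟩ := by
            apply Subtype.ext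
            simp [← hb0, ha1]
          rw [hvw, ← hb0, ha1]
          have := hC.nonneg (fullInfo ⟨w, hw⟩)
          linarith
        -- main case
        set m2 : Measure (Δ X) := ENNReal.ofReal a • Measure.dirac (⟨v, hv⟩ : Δ X)
          + ENNReal.ofReal b • Measure.dirac (⟨w, hw⟩ : Δ X) with hm2
        have hm2p : IsProbabilityMeasure m2 := by
          constructor
          rw [hm2]
          simp only [Measure.add_apply, Measure.smul_apply, smul_eq_mul, measure_univ, mul_one]
          rw [← ENNReal.ofReal_add ha hb, hab, ENNReal.ofReal_one]
        set π2 : PM X := ⟨m2, hm2p⟩ with hπ2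
        have key := hadd π2 fullInfo fullInfo_measurable (fullInfo_mp π2)
        rw [comp_fullInfo] at key
        have hbar2 : barPt π2 = ⟨a • v + b • w, hmem⟩ := by
          apply Subtype.ext
          funext x
          show ∫ ν, (ν : X → ℝ) x ∂m2 = (a • v + b • w) x
          rw [hm2, integral_add_measure
            ((integrable_dirac' (measurable_eval x) _).smul_measure ENNReal.ofReal_ne_top)
            ((integrable_dirac' (measurable_eval x) _).smul_measure ENNReal.ofReal_ne_top),
            integral_smul_measure, integral_smul_measure, integral_dirac, integral_dirac,
            ENNReal.toReal_ofReal ha, ENNReal.toReal_ofReal hb]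
          simp [smul_eq_mul]
          rfl
        have hint : ∫ μ, C (fullInfo μ) ∂(π2 : Measure (Δ X))
            = a * C (fullInfo ⟨v, hv⟩) + b * C (fullInfo ⟨w, hw⟩) := by
          show ∫ μ, C (fullInfo μ) ∂m2 = _
          have hCm : Measurable fun μ : Δ X => C (fullInfo μ) :=
            hC.measurable.comp fullInfo_measurable
          rw [hm2, integral_add_measure
            ((integrable_dirac' hCm _).smul_measure ENNReal.ofReal_ne_top)
            ((integrable_dirac' hCm _).smul_measure ENNReal.ofReal_ne_top),
            integral_smul_measure, integral_smul_measure, integral_dirac, integral_dirac,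
            ENNReal.toReal_ofReal ha, ENNReal.toReal_ofReal hb]
          simp [smul_eq_mul]
        rw [hbar2, hint] at key
        have := hC.nonneg π2
        linarith
      linarith
    · intro π
      have key := hadd π fullInfo fullInfo_measurable (fullInfo_mp π)
      rw [comp_fullInfo] at key
      have hH1 : (if h : bar π ∈ Δ X then -C (fullInfo ⟨bar π, h⟩) else 0)
          = -C (fullInfo (barPt π)) := by
        rw [dif_pos (bar_mem π)]
        rfl
      have hHint : (∫ ν, (if h : ((ν : Δ X) : X → ℝ) ∈ Δ X
            then -C (fullInfo ⟨((ν : Δ X) : X → ℝ), h⟩) else 0) ∂(π : Measure (Δ X)))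
          = -∫ μ, C (fullInfo μ) ∂(π : Measure (Δ X)) := by
        rw [← integral_neg]
        refine integral_congr_ae (Filter.Eventually.of_forall fun ν => ?_)
        show (if h : ((ν : Δ X) : X → ℝ) ∈ Δ X
            then -C (fullInfo ⟨((ν : Δ X) : X → ℝ), h⟩) else 0) = -C (fullInfo ν)
        rw [dif_pos (show ((ν : Δ X) : X → ℝ) ∈ Δ X from ν.2)]
        rfl
      rw [hHint]
      rw [show (fun v => if h : v ∈ Δ X then -C (fullInfo ⟨v, h⟩) else 0) (bar π)
          = -C (fullInfo (barPt π)) from hH1]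
      linarith

end IC
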